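/- Let A be a free ℤ-module of finite rank and let v_1, …, v_r ∈ A be elements whose images span the ℚ-vector space A ⊗_ℤ ℚ. Then the following are equivalent: (1) for every subset S ⊆ {1, …, r}, the quotient A / Σ_{i∈S} ℤ v_i is torsion-free; (2) for every subset S ⊆ {1, …, r}, if {v_i : i ∈ S} is a ℚ-basis of A ⊗_ℤ ℚ, then it is a ℤ-basis of A. -/

import Mathlib

open scoped TensorProduct

private lemma exists_int_smul_mem_span' {V : Type*} [AddCommGroup V] [Module ℚ V]
    (X : Set V) {x : V} (hx : x ∈ Submodule.span ℚ X) :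
    ∃ n : ℤ, n ≠ 0 ∧ n • x ∈ Submodule.span ℤ X := by
  induction hx using Submodule.span_induction with
  | mem y hy => exact ⟨1, one_ne_zero, by simpa using Submodule.subset_span hy⟩
  | zero => exact ⟨1, one_ne_zero, by simp⟩
  | add y z _ _ hy hz =>
      obtain ⟨n, hn, hny⟩ := hy
      obtain ⟨m, hm, hmz⟩ := hz
      refine ⟨n * m, mul_ne_zero hn hm, ?_⟩
      have h1 : (n * m) • y = m • (n • y) := by rw [mul_comm, mul_smul]
      have h2 : (n * m) • z = n • (m • z) := mul_smul n m z
      rw [smul_add, h1, h2]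
      exact Submodule.add_mem _ (Submodule.smul_mem _ _ hny) (Submodule.smul_mem _ _ hmz)
  | smul q y _ hy =>
      obtain ⟨n, hn, hny⟩ := hy
      have hd : ((q.den : ℤ)) ≠ 0 := by exact_mod_cast q.den_ne_zero
      refine ⟨(q.den : ℤ) * n, mul_ne_zero hd hn, ?_⟩
      have key : ((q.den : ℤ) * n) • (q • y) = q.num • (n • y) := by
        rw [← Int.cast_smul_eq_zsmul ℚ ((q.den : ℤ) * n), ← Int.cast_smul_eq_zsmul ℚ q.num,
          smul_smul, ← Int.cast_smul_eq_zsmul ℚ n, smul_smul]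
        congr 1
        have hden : (q.den : ℚ) * q = (q.num : ℚ) := Rat.den_mul_eq_num q
        push_cast
        calc ((q.den : ℚ) * (n : ℚ)) * q = ((q.den : ℚ) * q) * n := by ring
          _ = (q.num : ℚ) * n := by rw [hden]
      rw [key]
      exact Submodule.smul_mem _ _ hny

private lemma int_smul_bridge {M : Type*} [AddCommGroup M] (h : Module ℤ M) (n : ℤ) (x : M) :
    @HSMul.hSMul ℤ M M
      (@instHSMul ℤ M
        (@SMulZeroClass.toSMul ℤ M _
          (@SMulWithZero.toSMulZeroClass ℤ M _ _
            (@MulActionWithZero.toSMulWithZero ℤ M _ _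
              (@Module.toMulActionWithZero ℤ M _ _ h))))) n x
    = n • x := by exact int_smul_eq_zsmul h n x

/-- For a finite-rank free ℤ-module `A` and `v₁, …, v_r ∈ A` whose
images span `ℚ ⊗ A`, all quotients `A / Σ_{i∈S} ℤ vᵢ` are torsion-free iff every
subfamily that is a ℚ-basis of `ℚ ⊗ A` is a ℤ-basis of `A`. -/
theorem stmt4 (A : Type*)
    [AddCommGroup A] [Module ℤ A] [Module.Free ℤ A] [Module.Finite ℤ A]
    (r : ℕ) (v : Fin r → A)
    (hspan : Submodule.span ℚ
      (Set.range fun i => ((1 : ℚ) ⊗ₜ[ℤ] v i : ℚ ⊗[ℤ] A)) = ⊤) :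
    (∀ S : Set (Fin r),
        NoZeroSMulDivisors ℤ (A ⧸ Submodule.span ℤ (v '' S))) ↔
      (∀ S : Set (Fin r),
        (LinearIndependent ℚ (fun i : S => ((1 : ℚ) ⊗ₜ[ℤ] v i : ℚ ⊗[ℤ] A)) ∧
          Submodule.span ℚ
            (Set.range fun i : S => ((1 : ℚ) ⊗ₜ[ℤ] v i : ℚ ⊗[ℤ] A)) = ⊤) →
        (LinearIndependent ℤ (fun i : S => v i) ∧
          Submodule.span ℤ (v '' S) = ⊤)) := by
  classical
  set V := ℚ ⊗[ℤ] A with hV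
  set φ : A →ₗ[ℤ] V := TensorProduct.mk ℤ ℚ A 1 with hφdef
  have hφv : ∀ a : A, φ a = (1 : ℚ) ⊗ₜ[ℤ] a := fun a => rfl
  haveI hloc : IsLocalizedModule (nonZeroDivisors ℤ) φ :=
    (isLocalizedModule_iff_isBaseChange (nonZeroDivisors ℤ) ℚ φ).mpr
      (TensorProduct.isBaseChange ℤ A ℚ)
  have hinj : Function.Injective φ := by
    intro a b hab
    have h0 : φ (a - b) = 0 := by rw [map_sub, hab, sub_self]
    obtain ⟨s, hs⟩ := (IsLocalizedModule.eq_zero_iff (nonZeroDivisors ℤ) φ).mp h0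
    rcases (Module.Free.chooseBasis ℤ A).smul_eq_zero.mp hs with h1 | h1
    · exact absurd h1 (nonZeroDivisors.coe_ne_zero s)
    · exact sub_eq_zero.mp h1
  have hone : Function.Injective fun n : ℤ => n • (1 : ℚ) := by
    intro a b hab
    have : (a : ℚ) = b := by simpa using hab
    exact_mod_cast this
  -- image/range juggling
  have hrangeS : ∀ S : Set (Fin r),
      (Set.range fun i : S => ((1 : ℚ) ⊗ₜ[ℤ] v i : V)) = φ '' (v '' S) := by
    intro S
    ext w
    constructor
    · rintro ⟨i, rfl⟩; exact ⟨v i, ⟨i, i.2, rfl⟩, rfl⟩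
    · rintro ⟨a, ⟨i, hi, rfl⟩, rfl⟩; exact ⟨⟨i, hi⟩, rfl⟩
  constructor
  · -- torsion-free quotients ⇒ ℚ-bases are ℤ-bases
    intro h S hS
    obtain ⟨hind, hsp⟩ := hS
    constructor
    · have h1 : LinearIndependent ℤ (fun i : S => ((1 : ℚ) ⊗ₜ[ℤ] v i : V)) :=
        hind.restrict_scalars hone
      exact LinearIndependent.of_comp φ h1
    · haveI := h S
      rw [eq_top_iff]
      rintro x -
      have hx : φ x ∈ Submodule.span ℚ (φ '' (v '' S)) := by
        rw [← hrangeS S, hsp]; trivial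
      obtain ⟨n, hn, hmem⟩ := exists_int_smul_mem_span' _ hx
      rw [← φ.map_smul, ← Submodule.map_span, Submodule.mem_map] at hmem
      obtain ⟨y, hy, hyx⟩ := hmem
      rw [hinj hyx] at hy
      have hq0 := (Submodule.Quotient.mk_eq_zero (Submodule.span ℤ (v '' S))).mpr hy
      have hq : n • (Submodule.Quotient.mk x : A ⧸ Submodule.span ℤ (v '' S)) = 0 := by
        have e1 := map_zsmul ((Submodule.span ℤ (v '' S)).mkQ) n x
        simp only [Submodule.mkQ_apply] at e1
        rw [← e1, ← int_smul_bridge ‹Module ℤ A› n x]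
        exact hq0
      obtain ⟨f⟩ := h S
      rcases f hq with h' | h'
      · exact absurd h' hn
      · rwa [Submodule.Quotient.mk_eq_zero] at h'
  · -- ℚ-bases are ℤ-bases ⇒ torsion-free quotients
    intro h S
    set ψ : Fin r → V := fun i => (1 : ℚ) ⊗ₜ[ℤ] v i with hψdef
    set Y : Set V := ψ '' S with hYdef
    have hYt : Y ⊆ Set.range ψ := Set.image_subset_range ψ S
    obtain ⟨b, hbY, hbspan, hbind⟩ := exists_linearIndependent ℚ Y
    obtain ⟨B, hBt, hbB, htB, hBind⟩ := exists_linearIndepOn_id_extension hbind (hbY.trans hYt)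
    have hBspan : Submodule.span ℚ B = ⊤ := by
      rw [eq_top_iff, ← hspan]
      exact Submodule.span_le.mpr htB
    choose j hj using fun w : B => hBt w.2
    set T : Set (Fin r) := Set.range j with hTdef
    have hmemT : ∀ i : T, ∃ u : B, j u = (i : Fin r) := fun i => i.2
    have hψT : ∀ i : T, ψ i ∈ B := by
      rintro ⟨i, u, rfl⟩
      rw [hj u]
      exact u.2
    have hrangeT : (Set.range fun i : T => ψ i) = B := by
      ext w
      constructor
      · rintro ⟨i, rfl⟩; exact hψT i
      · intro hw
        exact ⟨⟨j ⟨w, hw⟩, ⟨⟨w, hw⟩, rfl⟩⟩, hj ⟨w, hw⟩⟩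
    have hψTinj : ∀ i i' : T, ψ i = ψ i' → i = i' := by
      rintro ⟨i, u, rfl⟩ ⟨i', u', rfl⟩ hee
      rw [hj u, hj u'] at hee
      have : u = u' := Subtype.ext hee
      exact Subtype.ext (by rw [this])
    have hTind : LinearIndependent ℚ (fun i : T => ψ i) := by
      have hcomp : (fun i : T => ψ i)
          = ((↑) : B → V) ∘ (fun i : T => (⟨ψ i, hψT i⟩ : B)) := rfl
      rw [hcomp]
      refine hBind.comp _ ?_
      intro i i' hii'
      exact hψTinj i i' (congrArg Subtype.val hii')
    have hTspan : Submodule.span ℚ (Set.range fun i : T => ψ i) = ⊤ := by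
      rw [hrangeT, hBspan]
    obtain ⟨hTindZ, hTspanZ⟩ := h T ⟨hTind, hTspan⟩
    refine ⟨fun {c} {x} hcx => ?_⟩
    by_cases hc : c = 0
    · exact Or.inl hc
    right
    obtain ⟨a, rfl⟩ := Submodule.Quotient.mk_surjective _ x
    have e1 := map_zsmul ((Submodule.span ℤ (v '' S)).mkQ) c a
    simp only [Submodule.mkQ_apply] at e1
    rw [← e1, Submodule.Quotient.mk_eq_zero] at hcx
    rw [← int_smul_bridge ‹Module ℤ A› c a] at hcx
    have hca := hcx
    rw [Submodule.Quotient.mk_eq_zero]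
    -- φ a lands in the ℚ-span of b
    have h1 := Submodule.mem_map_of_mem (f := φ) hca
    rw [Submodule.map_span] at h1
    have himg : φ '' (v '' S) = Y := by
      rw [hYdef, Set.image_image]
      rfl
    rw [himg] at h1
    have h2 := Submodule.span_subset_span ℤ ℚ Y h1
    rw [φ.map_smul] at h2
    have hcQ : (c : ℚ) ≠ 0 := Int.cast_ne_zero.mpr hc
    have h3 : φ a ∈ Submodule.span ℚ Y := by
      have h4 : (c : ℚ) • φ a ∈ Submodule.span ℚ Y := by
        rw [Int.cast_smul_eq_zsmul]
        exact h2
      have h6 := Submodule.smul_mem (Submodule.span ℚ Y) ((c : ℚ)⁻¹) h4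
      rwa [inv_smul_smul₀ hcQ] at h6
    have h5 : φ a ∈ Submodule.span ℚ b := by rwa [hbspan]
    -- coordinates w.r.t. the basis indexed by T
    have haT : a ∈ Submodule.span ℤ (Set.range fun i : T => v i) := by
      have : v '' T = Set.range fun i : T => v i := Set.image_eq_range v T
      rw [← this, hTspanZ]
      trivial
    obtain ⟨cf, hcf⟩ := Finsupp.mem_span_range_iff_exists_finsupp.mp haT
    let BB : Module.Basis T ℚ V := Module.Basis.mk hTind (by rw [hTspan])
    have hBB : ∀ i : T, BB i = ψ i := fun i => Module.Basis.mk_apply hTind _ i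
    set cq : T →₀ ℚ := cf.mapRange (fun t : ℤ => (t : ℚ)) (by simp) with hcqdef
    have hrepr : BB.repr (φ a) = cq := by
      have hsum : φ a = Finsupp.linearCombination ℚ (fun i : T => ψ (i : Fin r)) cq := by
        rw [← hcf, map_finsuppSum, Finsupp.linearCombination_apply, hcqdef,
          Finsupp.sum_mapRange_index (by simp)]
        refine Finsupp.sum_congr ?_
        intro i _
        rw [φ.map_smul]
        exact (Int.cast_smul_eq_zsmul ℚ (cf i) (ψ (i : Fin r))).symm
      rw [hsum, show (fun i : T => ψ (i : Fin r)) = ⇑BB from (Module.Basis.coe_mk hTind _).symm]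
      exact BB.repr_linearCombination cq
    -- coefficients vanish outside b
    have hvanish : ∀ i : T, ψ i ∉ b → cf i = 0 := by
      intro i₀ hi₀
      have hker : Submodule.span ℚ b ≤ LinearMap.ker (BB.coord i₀) := by
        rw [Submodule.span_le]
        intro w hw
        have hwB : w ∈ B := hbB hw
        rw [← hrangeT] at hwB
        obtain ⟨i', hi'⟩ := hwB
        have hi'' : ψ (i' : Fin r) = w := hi'
        have hne : i' ≠ i₀ := by
          intro hcon
          rw [hcon] at hi''
          rw [← hi''] at hw
          exact hi₀ hw
        have hz : BB.coord i₀ w = 0 := by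
          rw [← hi'', ← hBB i', Module.Basis.coord_apply, Module.Basis.repr_self]
          exact Finsupp.single_eq_of_ne hne.symm
        simpa [LinearMap.mem_ker] using hz
      have h0 : BB.coord i₀ (φ a) = 0 := hker h5
      rw [Module.Basis.coord_apply, hrepr] at h0
      have : (cf i₀ : ℚ) = 0 := by simpa [hcqdef, Finsupp.mapRange_apply] using h0
      exact_mod_cast this
    -- conclude
    rw [← hcf]
    rw [Finsupp.sum]
    refine Submodule.sum_mem _ ?_
    intro i hi
    have hci : cf i ≠ 0 := Finsupp.mem_support_iff.mp hi
    have hib : ψ i ∈ b := by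
      by_contra hcon
      exact hci (hvanish i hcon)
    have hiY : ψ i ∈ Y := hbY hib
    obtain ⟨i₁, hi₁S, hi₁⟩ := hiY
    have hv : v (i : Fin r) = v i₁ := (hinj (show φ (v i₁) = φ (v (i : Fin r)) from hi₁)).symm
    refine Submodule.smul_mem _ _ (Submodule.subset_span ?_)
    rw [hv]
    exact ⟨i₁, hi₁S, rfl⟩
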